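/- Let G = HNN(H, A, t) be a pro-p HNN-extension of a finitely generated pro-p group H over a procyclic subgroup A, with associated monomorphism f: A → H. Then d(G) ≥ d(H). -/

import Mathlib

/-- A pro-`p` group: a compact, totally disconnected topological group in which
every open normal subgroup has `p`-power index. -/
def IsProP (p : ℕ) (G : Type*) [Group G] [TopologicalSpace G] [IsTopologicalGroup G] : Prop :=
  CompactSpace G ∧ TotallyDisconnectedSpace G ∧
    ∀ U : Subgroup G, U.Normal → IsOpen (U : Set G) → ∃ n : ℕ, U.index = p ^ n

/-- `dmin G` is the minimal number of topological generators of `G`. -/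
noncomputable def dmin (G : Type*) [Group G] [TopologicalSpace G] [IsTopologicalGroup G] : ℕ :=
  sInf {n : ℕ | ∃ S : Finset G, S.card = n ∧
    (Subgroup.closure (S : Set G)).topologicalClosure = ⊤}

/-- `G` is topologically finitely generated. -/
def TopFG (G : Type*) [Group G] [TopologicalSpace G] [IsTopologicalGroup G] : Prop :=
  ∃ S : Finset G, (Subgroup.closure (S : Set G)).topologicalClosure = ⊤

/-- `G` is procyclic: topologically generated by one element. -/
def Procyclic (G : Type*) [Group G] [TopologicalSpace G] [IsTopologicalGroup G] : Prop :=
  ∃ c : G, (Subgroup.closure ({c} : Set G)).topologicalClosure = ⊤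


set_option linter.unusedSectionVars false

namespace DminAux


variable {H : Type*} [Group H] [TopologicalSpace H] [IsTopologicalGroup H] {p : ℕ}

lemma addhom_one {φ : H → ZMod p} (hadd : ∀ x y, φ (x * y) = φ x + φ y) : φ 1 = 0 := by
  have h := hadd 1 1
  rw [one_mul] at h
  exact (left_eq_add.mp h)

lemma addhom_inv {φ : H → ZMod p} (hadd : ∀ x y, φ (x * y) = φ x + φ y) (x : H) :
    φ x⁻¹ = -φ x := by
  have h := hadd x⁻¹ x
  rw [inv_mul_cancel, addhom_one hadd] at h
  exact eq_neg_of_add_eq_zero_left h.symm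

lemma isOpen_ker_of {φ : H → ZMod p} (hadd : ∀ x y, φ (x * y) = φ x + φ y)
    {W : Set H} (hW : IsOpen W) (h1 : (1 : H) ∈ W) (h0 : ∀ w ∈ W, φ w = 0) :
    IsOpen {x | φ x = 0} := by
  have heq : {x | φ x = 0} = ⋃ k : {x : H | φ x = 0}, (fun y => (k : H) * y) '' W := by
    ext x
    constructor
    · intro hx
      exact Set.mem_iUnion.mpr ⟨⟨x, hx⟩, ⟨1, h1, mul_one x⟩⟩
    · intro hx
      obtain ⟨k, w, hw, rfl⟩ := Set.mem_iUnion.mp hx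
      show φ _ = 0
      rw [hadd, h0 w hw, k.2, add_zero]
  rw [heq]
  exact isOpen_iUnion fun k => (Homeomorph.mulLeft (k : H)).isOpenMap _ hW

lemma isOpen_level {φ : H → ZMod p} (hadd : ∀ x y, φ (x * y) = φ x + φ y)
    (hker : IsOpen {x | φ x = 0}) (c : ZMod p) : IsOpen {x | φ x = c} := by
  by_cases hne : ∃ x₀, φ x₀ = c
  · obtain ⟨x₀, hx₀⟩ := hne
    have heq : {x | φ x = c} = (fun y => x₀ * y) '' {x | φ x = 0} := by
      ext x
      constructor
      · intro hx
        refine ⟨x₀⁻¹ * x, ?_, by group⟩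
        show φ _ = 0
        rw [hadd, addhom_inv hadd, hx₀, hx]
        ring
      · rintro ⟨w, hw, rfl⟩
        show φ _ = c
        rw [hadd, hx₀, hw, add_zero]
    rw [heq]
    exact (Homeomorph.mulLeft x₀).isOpenMap _ hker
  · have : {x | φ x = c} = ∅ := by
      ext x; simp only [Set.mem_setOf_eq, Set.mem_empty_iff_false, iff_false]
      exact fun h => hne ⟨x, h⟩
    rw [this]; exact isOpen_empty

/-- The subgroup `{x | φ x = 0}` for an additive character. -/
def kerSubgroup (φ : H → ZMod p) (hadd : ∀ x y, φ (x * y) = φ x + φ y) : Subgroup H where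
  carrier := {x | φ x = 0}
  one_mem' := addhom_one hadd
  mul_mem' := by
    intro x y hx hy
    show φ _ = 0
    rw [hadd, hx, hy, add_zero]
  inv_mem' := by
    intro x hx
    show φ _ = 0
    rw [addhom_inv hadd, hx, neg_zero]

/-- The space of continuous additive characters of `H` with values in `ZMod p`. -/
def charSpace (p : ℕ) [Fact p.Prime] (H : Type*) [Group H] [TopologicalSpace H]
    [IsTopologicalGroup H] : Submodule (ZMod p) (H → ZMod p) where
  carrier := {φ | (∀ x y, φ (x * y) = φ x + φ y) ∧ IsOpen {x | φ x = 0}}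
  zero_mem' := by
    refine ⟨fun x y => by simp, ?_⟩
    have : {x : H | (0 : H → ZMod p) x = 0} = Set.univ := by ext x; simp
    rw [this]; exact isOpen_univ
  add_mem' := by
    rintro φ ψ ⟨hφa, hφk⟩ ⟨hψa, hψk⟩
    have hadd : ∀ x y, (φ + ψ) (x * y) = (φ + ψ) x + (φ + ψ) y := by
      intro x y
      simp only [Pi.add_apply, hφa, hψa]
      ring
    refine ⟨hadd, ?_⟩
    refine isOpen_ker_of hadd (hφk.inter hψk) ⟨addhom_one hφa, addhom_one hψa⟩ ?_
    rintro w ⟨hw1, hw2⟩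
    show φ w + ψ w = 0
    rw [Set.mem_setOf_eq.mp hw1, Set.mem_setOf_eq.mp hw2, add_zero]
  smul_mem' := by
    rintro c φ ⟨hφa, hφk⟩
    have hadd : ∀ x y, (c • φ) (x * y) = (c • φ) x + (c • φ) y := by
      intro x y
      simp only [Pi.smul_apply, hφa, smul_eq_mul]
      ring
    refine ⟨hadd, ?_⟩
    refine isOpen_ker_of hadd hφk (addhom_one hφa) ?_
    intro w hw
    show c • φ w = 0
    rw [Set.mem_setOf_eq.mp hw, smul_zero]



/-- Every proper subgroup of a finite `p`-group is killed by a nontrivial character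
with values in `ZMod p`. -/
lemma pgroup_char {p : ℕ} [Fact p.Prime] {Q : Type*} [Group Q] [Finite Q]
    (hQ : IsPGroup p Q) (N : Subgroup Q) (hN : N ≠ ⊤) :
    ∃ χ : Q →* Multiplicative (ZMod p), (∀ x ∈ N, χ x = 1) ∧ ∃ q, χ q ≠ 1 := by
  have hp : p.Prime := Fact.out
  -- find a coatom above N
  obtain ⟨K, hKco, hNK⟩ := (eq_top_or_exists_le_coatom N).resolve_left hN
  -- K is normal
  haveI : K.Normal := by
    rw [← Subgroup.normalizer_eq_top_iff]
    have hnil : Group.IsNilpotent Q := hQ.isNilpotent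
    have hnc := normalizerCondition_of_isNilpotent (G := Q)
    exact hKco.2 _ (hnc K (lt_top_iff_ne_top.mpr hKco.1))
  -- the quotient has order p
  obtain ⟨q₀, hq₀⟩ : ∃ q, q ∉ K := by
    by_contra h
    push_neg at h
    exact hKco.1 ((Subgroup.eq_top_iff' K).mpr h)
  have hQK : IsPGroup p (Q ⧸ K) := hQ.to_quotient K
  have hnt : Nontrivial (Q ⧸ K) :=
    ⟨QuotientGroup.mk q₀, 1, by
      intro h
      exact hq₀ ((QuotientGroup.eq_one_iff q₀).mp h)⟩
  obtain ⟨k, hk⟩ := IsPGroup.iff_card.mp hQK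
  have hk1 : k ≠ 0 := by
    rintro rfl
    rw [pow_zero] at hk
    exact (Finite.one_lt_card (α := Q ⧸ K)).ne' hk
  have hdvd : p ∣ Nat.card (Q ⧸ K) := by
    rw [hk]
    exact dvd_pow_self p hk1
  obtain ⟨x, hx⟩ := exists_prime_orderOf_dvd_card' (G := Q ⧸ K) p hdvd
  -- zpowers x = ⊤
  have hZ : Subgroup.zpowers x = ⊤ := by
    have hcomap : K < Subgroup.comap (QuotientGroup.mk' K) (Subgroup.zpowers x) := by
      refine lt_of_le_of_ne (fun y hy => ?_) ?_
      · simp only [Subgroup.mem_comap]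
        have : QuotientGroup.mk' K y = 1 := (QuotientGroup.eq_one_iff y).mpr hy
        rw [this]
        exact one_mem _
      · intro h
        obtain ⟨y, hy⟩ := QuotientGroup.mk'_surjective K x
        have hyK : y ∈ Subgroup.comap (QuotientGroup.mk' K) (Subgroup.zpowers x) := by
          simp only [Subgroup.mem_comap, hy]
          exact Subgroup.mem_zpowers x
        rw [← h] at hyK
        have : QuotientGroup.mk' K y = 1 := (QuotientGroup.eq_one_iff y).mpr hyK
        rw [hy] at this
        rw [this] at hx
        simp only [orderOf_one] at hx
        exact hp.one_lt.ne' hx.symm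
    have htop := hKco.2 _ hcomap
    rw [Subgroup.eq_top_iff' (Subgroup.zpowers x)]
    intro z
    obtain ⟨y, hy⟩ := QuotientGroup.mk'_surjective K z
    have : y ∈ Subgroup.comap (QuotientGroup.mk' K) (Subgroup.zpowers x) := by
      rw [htop]; trivial
    simpa [hy] using this
  have hcard : Nat.card (Q ⧸ K) = p := by
    have h1 : Nat.card (Subgroup.zpowers x) = p := by rw [Nat.card_zpowers, hx]
    rw [← h1, hZ]
    exact Subgroup.card_top.symm
  haveI : IsCyclic (Q ⧸ K) := isCyclic_of_prime_card hcard
  haveI : NeZero p := ⟨hp.ne_zero⟩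
  have hcard' : Nat.card (Multiplicative (ZMod p)) = p := by
    rw [Nat.card_congr Multiplicative.toAdd, Nat.card_zmod]
  haveI : IsCyclic (Multiplicative (ZMod p)) := isCyclic_of_prime_card hcard'
  let e : (Q ⧸ K) ≃* Multiplicative (ZMod p) :=
    mulEquivOfCyclicCardEq (by rw [hcard, hcard'])
  refine ⟨e.toMonoidHom.comp (QuotientGroup.mk' K), ?_, ?_⟩
  · intro y hy
    have h1 : QuotientGroup.mk' K y = 1 := (QuotientGroup.eq_one_iff y).mpr (hNK hy)
    simp only [MonoidHom.comp_apply, h1, MulEquiv.coe_toMonoidHom, map_one]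
  · refine ⟨q₀, ?_⟩
    simp only [MonoidHom.comp_apply, MulEquiv.coe_toMonoidHom]
    intro h
    have h1 : QuotientGroup.mk' K q₀ = 1 := by
      apply e.injective
      rw [h, map_one]
    exact hq₀ ((QuotientGroup.eq_one_iff q₀).mp h1)



/-- Pro-p Nakayama/Frattini: a closed subgroup on which every continuous
`ZMod p`-character vanishes only if the character is trivial must be the whole group. -/
lemma nakayama {p : ℕ} [Fact p.Prime] {H : Type*} [Group H] [TopologicalSpace H]
    [IsTopologicalGroup H]
    (hH : CompactSpace H ∧ TotallyDisconnectedSpace H ∧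
      ∀ U : Subgroup H, U.Normal → IsOpen (U : Set H) → ∃ n : ℕ, U.index = p ^ n)
    (M : Subgroup H) (hMc : IsClosed (M : Set H))
    (hchar : ∀ φ : H → ZMod p, (∀ x y, φ (x * y) = φ x + φ y) → IsOpen {x | φ x = 0} →
      (∀ x ∈ M, φ x = 0) → ∀ x, φ x = 0) :
    M = ⊤ := by
  obtain ⟨hcs, htd, hidx⟩ := hH
  by_contra hne
  obtain ⟨g, hg⟩ : ∃ g, g ∉ M := by
    by_contra h
    push_neg at h
    exact hne ((Subgroup.eq_top_iff' M).mpr h)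
  -- H is Hausdorff
  haveI : T2Space H := by
    apply IsTopologicalGroup.t2Space_iff_one_closed.mpr
    have h1 : connectedComponent (1 : H) = {1} :=
      totallyDisconnectedSpace_iff_connectedComponent_singleton.mp htd 1
    rw [← h1]
    exact isClosed_connectedComponent
  -- find an open normal subgroup U with g*U disjoint from M
  have hO : IsOpen ((fun x => g * x) ⁻¹' (↑M)ᶜ) :=
    (hMc.isOpen_compl).preimage (continuous_mul_left g)
  have h1O : (1 : H) ∈ (fun x => g * x) ⁻¹' (↑M)ᶜ := by
    simp only [Set.mem_preimage, mul_one, Set.mem_compl_iff, SetLike.mem_coe]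
    exact hg
  obtain ⟨C, hC, h1C, hCO⟩ := compact_exists_isClopen_in_isOpen hO h1O
  obtain ⟨U, hU⟩ := IsTopologicalGroup.exist_openNormalSubgroup_sub_clopen_nhds_of_one hC h1C
  set V : Subgroup H := U.toSubgroup with hV
  haveI hVn : V.Normal := U.isNormal'
  have hVopen : IsOpen (V : Set H) := U.toOpenSubgroup.isOpen
  have hdisj : ∀ u ∈ V, g * u ∉ M := fun u hu => hCO (hU hu)
  -- g is not in M ⊔ V
  have hgMV : g ∉ M ⊔ V := by
    intro hmem
    rw [← SetLike.mem_coe, Subgroup.mul_normal M V] at hmem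
    obtain ⟨m, hm, u, hu, hmu⟩ := hmem
    have : g * u⁻¹ ∈ M := by
      rw [← hmu]
      simpa [mul_assoc] using hm
    exact hdisj u⁻¹ (inv_mem hu) this
  -- the quotient H ⧸ V is a finite p-group
  obtain ⟨k, hk⟩ := hidx V hVn hVopen
  haveI : V.FiniteIndex := ⟨by rw [hk]; exact pow_ne_zero k (Fact.out (p := p.Prime)).ne_zero⟩
  haveI : Finite (H ⧸ V) := V.finite_quotient_of_finiteIndex
  have hQp : IsPGroup p (H ⧸ V) := IsPGroup.of_card (by rw [← hk]; rfl)
  -- image of M ⊔ V is proper in the quotient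
  set N : Subgroup (H ⧸ V) := (M ⊔ V).map (QuotientGroup.mk' V) with hN
  have hNne : N ≠ ⊤ := by
    intro htop
    have hmem : QuotientGroup.mk' V g ∈ N := by rw [htop]; trivial
    obtain ⟨y, hy, hyg⟩ := hmem
    have : y⁻¹ * g ∈ V := by
      have := (QuotientGroup.mk'_eq_mk' (N := V)).mp hyg
      obtain ⟨z, hz, hzy⟩ := this
      rw [← hzy]
      simpa using hz
    have : g ∈ M ⊔ V := by
      have hgy : g = y * (y⁻¹ * g) := by group
      rw [hgy]
      exact mul_mem hy (Subgroup.mem_sup_right this)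
    exact hgMV this
  -- get a character of the quotient and pull it back
  obtain ⟨χ, hχN, q, hq⟩ := pgroup_char hQp N hNne
  set φ : H → ZMod p := fun x => Multiplicative.toAdd (χ (QuotientGroup.mk' V x)) with hφ
  have hadd : ∀ x y, φ (x * y) = φ x + φ y := by
    intro x y
    simp [hφ, map_mul]
  have hVker : ∀ v ∈ V, φ v = 0 := by
    intro v hv
    have h1 : QuotientGroup.mk' V v = 1 := (QuotientGroup.eq_one_iff v).mpr hv
    show Multiplicative.toAdd (χ (QuotientGroup.mk' V v)) = 0
    rw [h1, map_one]
    rfl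
  have hker : IsOpen {x | φ x = 0} :=
    isOpen_ker_of hadd hVopen (one_mem V) hVker
  have hMker : ∀ x ∈ M, φ x = 0 := by
    intro x hx
    have : QuotientGroup.mk' V x ∈ N :=
      ⟨x, Subgroup.mem_sup_left hx, rfl⟩
    show Multiplicative.toAdd (χ (QuotientGroup.mk' V x)) = 0
    rw [hχN _ this]
    rfl
  have hzero := hchar φ hadd hker hMker
  obtain ⟨y, hy⟩ := QuotientGroup.mk'_surjective V q
  apply hq
  have := hzero y
  rw [hφ] at this
  simp only [hy] at this
  have h2 : χ q = Multiplicative.ofAdd (0 : ZMod p) := by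
    rw [← this]
    rfl
  rw [h2]
  rfl


lemma sep_aux (p : ℕ) [Fact p.Prime] (X : Type*) :
    ∀ (n : ℕ) (V : Submodule (ZMod p) (X → ZMod p)), FiniteDimensional (ZMod p) V →
      Module.finrank (ZMod p) V ≤ n →
      ∃ T : Finset X, T.card ≤ Module.finrank (ZMod p) V ∧
        ∀ φ ∈ V, (∀ x ∈ T, φ x = 0) → φ = 0 := by
  haveI := Classical.decEq X
  intro n
  induction n with
  | zero =>
    intro V hfd hle
    refine ⟨∅, by simp, ?_⟩
    intro φ hφ _
    have hV : V = ⊥ := by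
      rw [Nat.le_zero] at hle
      exact Submodule.finrank_eq_zero.mp hle
    rw [hV] at hφ
    simpa using hφ
  | succ n ih =>
    intro V hfd hle
    by_cases hbot : ∀ φ ∈ V, φ = (0 : X → ZMod p)
    · exact ⟨∅, by simp, fun φ hφ _ => hbot φ hφ⟩
    · push_neg at hbot
      obtain ⟨φ₀, hφ₀V, hφ₀⟩ := hbot
      obtain ⟨x₀, hx₀⟩ : ∃ x₀, φ₀ x₀ ≠ 0 := by
        by_contra h
        push_neg at h
        exact hφ₀ (funext h)
      set ℓ : (X → ZMod p) →ₗ[ZMod p] ZMod p := LinearMap.proj x₀ with hℓ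
      set V' : Submodule (ZMod p) (X → ZMod p) := V ⊓ LinearMap.ker ℓ with hV'
      haveI : FiniteDimensional (ZMod p) V' :=
        Submodule.finiteDimensional_of_le (inf_le_left : V' ≤ V)
      have hlt : V' < V := by
        refine lt_of_le_of_ne inf_le_left ?_
        intro h
        have hmem : φ₀ ∈ V' := by rw [h]; exact hφ₀V
        exact hx₀ hmem.2
      have hrk : Module.finrank (ZMod p) V' < Module.finrank (ZMod p) V :=
        Submodule.finrank_lt_finrank_of_lt hlt
      obtain ⟨T', hT'c, hT's⟩ := ih V' inferInstance (Nat.lt_succ_iff.mp (lt_of_lt_of_le hrk hle))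
      refine ⟨insert x₀ T', ?_, ?_⟩
      · calc (insert x₀ T').card ≤ T'.card + 1 := Finset.card_insert_le _ _
          _ ≤ Module.finrank (ZMod p) V' + 1 := by omega
          _ ≤ Module.finrank (ZMod p) V := by omega
      · intro φ hφ hz
        have hφx₀ : φ x₀ = 0 := hz x₀ (Finset.mem_insert_self _ _)
        have hφV' : φ ∈ V' := ⟨hφ, by simpa [hℓ] using hφx₀⟩
        exact hT's φ hφV' fun x hx => hz x (Finset.mem_insert_of_mem hx)

lemma closed_subgroup_eq_top {H : Type*} [Group H] [TopologicalSpace H] [IsTopologicalGroup H]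
    {a : H} {A : Subgroup H} (hA : A = (Subgroup.closure ({a} : Set H)).topologicalClosure)
    (ha : a ∈ A) (Z : Subgroup ↥A) (hZc : IsClosed (Z : Set ↥A)) (haZ : ⟨a, ha⟩ ∈ Z) :
    Z = ⊤ := by
  have hAc : IsClosed (A : Set H) := by
    rw [hA]
    exact Subgroup.isClosed_topologicalClosure _
  have hJ : (Subgroup.closure ({⟨a, ha⟩} : Set ↥A)).topologicalClosure = ⊤ := by
    apply Subgroup.map_injective A.subtype_injective
    have he : Topology.IsClosedEmbedding ((↑) : ↥A → H) :=
      Topology.IsClosedEmbedding.subtypeVal hAc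
    apply SetLike.ext'
    show (↑) '' ((Subgroup.closure ({⟨a, ha⟩} : Set ↥A)).topologicalClosure : Set ↥A) =
      ((⊤ : Subgroup ↥A).map A.subtype : Set H)
    rw [Subgroup.topologicalClosure_coe]
    rw [← he.closure_image_eq]
    have h1 : ((↑) '' ((Subgroup.closure ({⟨a, ha⟩} : Set ↥A)) : Set ↥A)) =
        ((Subgroup.closure ({a} : Set H)) : Set H) := by
      have h2 := MonoidHom.map_closure A.subtype ({⟨a, ha⟩} : Set ↥A)
      have h3 : A.subtype '' ({⟨a, ha⟩} : Set ↥A) = ({a} : Set H) := by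
        rw [Set.image_singleton]
        rfl
      rw [h3] at h2
      calc ((↑) '' ((Subgroup.closure ({⟨a, ha⟩} : Set ↥A)) : Set ↥A))
          = ⇑A.subtype '' ((Subgroup.closure ({⟨a, ha⟩} : Set ↥A)) : Set ↥A) := rfl
        _ = ((Subgroup.closure ({⟨a, ha⟩} : Set ↥A)).map A.subtype : Set H) :=
            (Subgroup.coe_map _ _).symm
        _ = ((Subgroup.closure ({a} : Set H)) : Set H) := by rw [h2]
    rw [h1]
    have hr : (⊤ : Subgroup ↥A).map A.subtype = A := by
      rw [← MonoidHom.range_eq_map, Subgroup.range_subtype]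
    rw [hr, hA, Subgroup.topologicalClosure_coe]
  have hle : (Subgroup.closure ({⟨a, ha⟩} : Set ↥A)).topologicalClosure ≤ Z :=
    Subgroup.topologicalClosure_minimal _
      ((Subgroup.closure_le Z).mpr (by simpa using haZ)) hZc
  rw [hJ] at hle
  exact top_le_iff.mp hle


lemma charSpace_vanish {p : ℕ} [Fact p.Prime] {G : Type*} [Group G] [TopologicalSpace G]
    [IsTopologicalGroup G] {ψ : G → ZMod p} (hψ : ψ ∈ charSpace p G) (S : Finset G)
    (hSgen : (Subgroup.closure (S : Set G)).topologicalClosure = ⊤)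
    (hz : ∀ s ∈ S, ψ s = 0) : ψ = 0 := by
  set K : Subgroup G := kerSubgroup ψ hψ.1 with hK
  have hKc : IsClosed (K : Set G) := Subgroup.isClosed_of_isOpen K hψ.2
  have h1 : Subgroup.closure (S : Set G) ≤ K := (Subgroup.closure_le K).mpr (fun s hs => hz s hs)
  have h2 : (Subgroup.closure (S : Set G)).topologicalClosure ≤ K :=
    Subgroup.topologicalClosure_minimal _ h1 hKc
  rw [hSgen] at h2
  funext x
  exact h2 (Subgroup.mem_top x)

/-- The evaluation map on a finite topological generating set. -/
noncomputable def charEval {p : ℕ} [Fact p.Prime] {G : Type*} [Group G] [TopologicalSpace G]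
    [IsTopologicalGroup G] (S : Finset G) :
    ↥(charSpace p G) →ₗ[ZMod p] (↥S → ZMod p) where
  toFun ψ := fun s => (ψ : G → ZMod p) (s : G)
  map_add' _ _ := rfl
  map_smul' _ _ := rfl

lemma charEval_injective {p : ℕ} [Fact p.Prime] {G : Type*} [Group G] [TopologicalSpace G]
    [IsTopologicalGroup G] (S : Finset G)
    (hSgen : (Subgroup.closure (S : Set G)).topologicalClosure = ⊤) :
    Function.Injective (charEval (p := p) S) := by
  rw [← LinearMap.ker_eq_bot, LinearMap.ker_eq_bot']
  intro ψ hψ0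
  have hz : ∀ s ∈ S, (ψ : G → ZMod p) s = 0 := fun s hs => congrFun hψ0 ⟨s, hs⟩
  exact Subtype.ext (charSpace_vanish ψ.2 S hSgen hz)

lemma charSpace_finite {p : ℕ} [Fact p.Prime] {G : Type*} [Group G] [TopologicalSpace G]
    [IsTopologicalGroup G] (S : Finset G)
    (hSgen : (Subgroup.closure (S : Set G)).topologicalClosure = ⊤) :
    Module.Finite (ZMod p) ↥(charSpace p G) :=
  Module.Finite.of_injective (charEval S) (charEval_injective S hSgen)

lemma charSpace_finrank_le {p : ℕ} [Fact p.Prime] {G : Type*} [Group G] [TopologicalSpace G]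
    [IsTopologicalGroup G] (S : Finset G)
    (hSgen : (Subgroup.closure (S : Set G)).topologicalClosure = ⊤) :
    Module.finrank (ZMod p) ↥(charSpace p G) ≤ S.card := by
  have h := LinearMap.finrank_le_finrank_of_injective (charEval_injective (p := p) S hSgen)
  rwa [Module.finrank_pi, Fintype.card_coe] at h

end DminAux


/-- If `G = HNN(H, A, t)` is a pro-p HNN-extension of a finitely generated pro-p group `H`
over a procyclic subgroup `A` with associated monomorphism `f : A → H`, then `d(G) ≥ d(H)`. -/
theorem dmin_HNN_ge (p : ℕ) (hp : p.Prime)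
    (H G : Type) [Group H] [TopologicalSpace H] [IsTopologicalGroup H]
    [Group G] [TopologicalSpace G] [IsTopologicalGroup G]
    (hH : IsProP p H) (hG : IsProP p G) (hHfg : TopFG H)
    (A : Subgroup H) (a : H)
    -- A is the procyclic subgroup topologically generated by a
    (hA : A = (Subgroup.closure ({a} : Set H)).topologicalClosure)
    (f : A →* H) (hf : Continuous f ∧ Function.Injective f)
    (ι : H →* G) (hι : Continuous ι ∧ Function.Injective ι)
    (t : G)
    (hrel : ∀ x : A, t * ι (x : H) * t⁻¹ = ι (f x))
    (hgen : (Subgroup.closure (Set.range ⇑ι ∪ {t})).topologicalClosure = ⊤)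
    -- universal property of the pro-p HNN-extension
    (huniv : ∀ (P : Type) [Group P] [TopologicalSpace P] [IsTopologicalGroup P], IsProP p P →
      ∀ (fH : H →* P) (s : P), Continuous fH →
        (∀ x : A, s * fH (x : H) * s⁻¹ = fH (f x)) →
        ∃ F : G →* P, Continuous F ∧ F.comp ι = fH ∧ F t = s) :
    dmin H ≤ dmin G := by
  
  classical
  haveI hpfact : Fact p.Prime := ⟨hp⟩
  haveI : NeZero p := ⟨hp.ne_zero⟩
  obtain ⟨hf_cont, hf_inj⟩ := hf
  obtain ⟨hι_cont, hι_inj⟩ := hι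
  obtain ⟨SH, hSH⟩ := hHfg
  have haA : a ∈ A := by
    rw [hA]
    exact Subgroup.le_topologicalClosure _ (Subgroup.subset_closure rfl)
  set b : H := f ⟨a, haA⟩ with hb
  -- discrete pro-p structure on Multiplicative (ZMod p)
  letI : TopologicalSpace (Multiplicative (ZMod p)) := ⊥
  haveI : DiscreteTopology (Multiplicative (ZMod p)) := ⟨rfl⟩
  haveI : IsTopologicalGroup (Multiplicative (ZMod p)) :=
    { toContinuousMul := inferInstance
      continuous_inv := continuous_of_discreteTopology }
  have hPproP : IsProP p (Multiplicative (ZMod p)) := by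
    refine ⟨inferInstance, inferInstance, ?_⟩
    intro U _ _
    have hdvd : U.index ∣ p := by
      have h1 : U.index ∣ Nat.card (Multiplicative (ZMod p)) := U.index_dvd_card
      rwa [Nat.card_congr Multiplicative.toAdd, Nat.card_zmod] at h1
    rcases (Nat.dvd_prime hp).mp hdvd with h | h
    · exact ⟨0, by rw [h, pow_zero]⟩
    · exact ⟨1, by rw [h, pow_one]⟩
  -- G is topologically finitely generated
  have hGfg : ∃ S : Finset G, (Subgroup.closure (S : Set G)).topologicalClosure = ⊤ := by
    refine ⟨insert t (SH.image ι), ?_⟩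
    set C := (Subgroup.closure ((insert t (SH.image ι) : Finset G) : Set G)).topologicalClosure
      with hC
    have hCc : IsClosed (C : Set G) := Subgroup.isClosed_topologicalClosure _
    have htC : t ∈ C :=
      Subgroup.le_topologicalClosure _ (Subgroup.subset_closure (by simp))
    have hιC : ∀ h : H, ι h ∈ C := by
      intro h
      have hcomap : (Subgroup.closure (SH : Set H)).topologicalClosure ≤ C.comap ι := by
        apply Subgroup.topologicalClosure_minimal
        · apply (Subgroup.closure_le _).mpr
          intro s hs
          simp only [SetLike.mem_coe, Subgroup.mem_comap]
          apply Subgroup.le_topologicalClosure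
          apply Subgroup.subset_closure
          simp only [Finset.coe_insert, Set.mem_insert_iff, Finset.coe_image, Set.mem_image]
          exact Or.inr ⟨s, hs, rfl⟩
        · exact IsClosed.preimage hι_cont hCc
      have hh : h ∈ (Subgroup.closure (SH : Set H)).topologicalClosure := by
        rw [hSH]; trivial
      exact hcomap hh
    have hsub : Subgroup.closure (Set.range ⇑ι ∪ {t}) ≤ C := by
      apply (Subgroup.closure_le _).mpr
      rintro x (⟨h, rfl⟩ | hx)
      · exact hιC h
      · rw [Set.mem_singleton_iff] at hx
        rw [hx]
        exact htC
    have h2 : (Subgroup.closure (Set.range ⇑ι ∪ {t})).topologicalClosure ≤ C :=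
      Subgroup.topologicalClosure_minimal _ hsub hCc
    rw [hgen] at h2
    exact top_le_iff.mp h2
  obtain ⟨S₀, hS₀⟩ := hGfg
  have hne : {n : ℕ | ∃ S : Finset G, S.card = n ∧
      (Subgroup.closure (S : Set G)).topologicalClosure = ⊤}.Nonempty :=
    ⟨S₀.card, S₀, rfl, hS₀⟩
  obtain ⟨S, hScard0, hSgen⟩ := Nat.sInf_mem hne
  have hScard : S.card = dmin G := hScard0
  -- the character spaces
  set VH : Submodule (ZMod p) (H → ZMod p) := DminAux.charSpace p H with hVH
  set VG : Submodule (ZMod p) (G → ZMod p) := DminAux.charSpace p G with hVG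
  haveI : Module.Finite (ZMod p) ↥VH := DminAux.charSpace_finite SH hSH
  haveI : Module.Finite (ZMod p) ↥VG := DminAux.charSpace_finite S hSgen
  have hVGrank : Module.finrank (ZMod p) ↥VG ≤ dmin G := by
    rw [← hScard]
    exact DminAux.charSpace_finrank_le S hSgen
  -- Step A : dmin H ≤ finrank VH
  have hstepA : dmin H ≤ Module.finrank (ZMod p) ↥VH := by
    obtain ⟨T, hTc, hTs⟩ := DminAux.sep_aux p H (Module.finrank (ZMod p) ↥VH) VH
      inferInstance le_rfl
    have hTgen : (Subgroup.closure (T : Set H)).topologicalClosure = ⊤ := by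
      apply DminAux.nakayama hH
      · exact Subgroup.isClosed_topologicalClosure _
      · intro φ hadd hker hvan
        have hz : φ = 0 := by
          apply hTs φ ⟨hadd, hker⟩
          intro x hx
          exact hvan x (Subgroup.le_topologicalClosure _ (Subgroup.subset_closure hx))
        intro x
        rw [hz]
        rfl
    exact le_trans (Nat.sInf_le ⟨T, rfl, hTgen⟩) hTc
  -- the functional cutting out characters compatible with the HNN relation
  set ℓ : (H → ZMod p) →ₗ[ZMod p] ZMod p :=
    (LinearMap.proj (R := ZMod p) (φ := fun _ : H => ZMod p) a) -
      (LinearMap.proj (R := ZMod p) (φ := fun _ : H => ZMod p) b) with hℓ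
  set K₀ : Submodule (ZMod p) (H → ZMod p) := VH ⊓ LinearMap.ker ℓ with hK₀
  -- Step B : finrank VH ≤ finrank K₀ + 1
  have hstepB : Module.finrank (ZMod p) ↥VH ≤ Module.finrank (ZMod p) ↥K₀ + 1 := by
    set ℓ' : ↥VH →ₗ[ZMod p] ZMod p := ℓ.comp VH.subtype with hℓ'
    have hmap : (LinearMap.ker ℓ').map VH.subtype = K₀ := by
      ext φ
      constructor
      · rintro ⟨⟨ψ, hψ⟩, hker, rfl⟩
        exact ⟨hψ, hker⟩
      · rintro ⟨hφ, hk⟩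
        exact ⟨⟨φ, hφ⟩, hk, rfl⟩
    have hfinK : Module.finrank (ZMod p) ↥K₀ = Module.finrank (ZMod p) ↥(LinearMap.ker ℓ') := by
      rw [← hmap]
      exact (Submodule.equivMapOfInjective VH.subtype Subtype.val_injective
        (LinearMap.ker ℓ')).finrank_eq.symm
    have h1 := LinearMap.finrank_range_add_finrank_ker ℓ'
    have h2 : Module.finrank (ZMod p) ↥(LinearMap.range ℓ') ≤ 1 := by
      have h3 := Submodule.finrank_le (LinearMap.range ℓ')
      rwa [Module.finrank_self] at h3
    omega
  -- Step C : finrank K₀ + 1 ≤ finrank VG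
  have hstepC : Module.finrank (ZMod p) ↥K₀ + 1 ≤ Module.finrank (ZMod p) ↥VG := by
    haveI : Fact (1 < p) := ⟨hp.one_lt⟩
    set r : ↥VG →ₗ[ZMod p] (H → ZMod p) :=
      { toFun := fun ψ => fun h => (ψ : G → ZMod p) (ι h)
        map_add' := fun _ _ => rfl
        map_smul' := fun _ _ => rfl } with hr
    -- K₀ is contained in the range of r
    have hK₀le : K₀ ≤ LinearMap.range r := by
      rintro φ ⟨hφVH, hφker⟩
      have hadd : ∀ x y : H, φ (x * y) = φ x + φ y := hφVH.1
      have hker : IsOpen {x : H | φ x = 0} := hφVH.2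
      have hab : φ a = φ b := by
        have h0 : φ a - φ b = 0 := hφker
        exact sub_eq_zero.mp h0
      have hAval : ∀ x : ↥A, φ (x : H) = φ ((f x : H)) := by
        set δ : ↥A → ZMod p := fun x => φ (x : H) - φ ((f x : H)) with hδ
        have hδadd : ∀ x y : ↥A, δ (x * y) = δ x + δ y := by
          intro x y
          have h1 : ((x * y : ↥A) : H) = (x : H) * (y : H) := rfl
          have h2 : ((f (x * y) : H)) = (f x : H) * (f y : H) := by rw [map_mul]
          simp only [hδ, h1, h2, hadd]
          ring
        have h1W : (1 : ↥A) ∈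
            (Subtype.val ⁻¹' {x : H | φ x = 0}) ∩ (⇑f ⁻¹' {x : H | φ x = 0}) := by
          constructor
          · show φ ((1 : ↥A) : H) = 0
            have h1 : ((1 : ↥A) : H) = 1 := rfl
            rw [h1]
            exact DminAux.addhom_one hadd
          · show φ (f 1) = 0
            rw [map_one]
            exact DminAux.addhom_one hadd
        have hWopen :
            IsOpen ((Subtype.val ⁻¹' {x : H | φ x = 0}) ∩ (⇑f ⁻¹' {x : H | φ x = 0})) :=
          (hker.preimage continuous_subtype_val).inter (hker.preimage hf_cont)
        have hδker : IsOpen {x : ↥A | δ x = 0} := by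
          apply DminAux.isOpen_ker_of hδadd hWopen h1W
          rintro w ⟨hw1, hw2⟩
          show φ (w : H) - φ ((f w : H)) = 0
          have hw1' : φ (w : H) = 0 := hw1
          have hw2' : φ ((f w : H)) = 0 := hw2
          rw [hw1', hw2', sub_zero]
        set Z : Subgroup ↥A := DminAux.kerSubgroup δ hδadd with hZ
        have hZc : IsClosed (Z : Set ↥A) := Subgroup.isClosed_of_isOpen Z hδker
        have haZ : (⟨a, haA⟩ : ↥A) ∈ Z := by
          show φ a - φ ((f ⟨a, haA⟩ : H)) = 0
          rw [← hb, hab, sub_self]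
        have hZtop := DminAux.closed_subgroup_eq_top hA haA Z hZc haZ
        intro x
        have hx : x ∈ Z := by rw [hZtop]; trivial
        have hx0 : δ x = 0 := hx
        exact sub_eq_zero.mp hx0
      set fH : H →* Multiplicative (ZMod p) :=
        { toFun := fun h => Multiplicative.ofAdd (φ h)
          map_one' := by
            show Multiplicative.ofAdd (φ 1) = 1
            rw [DminAux.addhom_one hadd]
            rfl
          map_mul' := fun x y => by
            show Multiplicative.ofAdd (φ (x * y)) =
              Multiplicative.ofAdd (φ x) * Multiplicative.ofAdd (φ y)
            rw [hadd]
            rfl } with hfH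
      have hfHcont : Continuous ⇑fH := by
        rw [continuous_def]
        intro s _
        have hpre : ⇑fH ⁻¹' s =
            ⋃ c : s, {x : H | φ x = Multiplicative.toAdd (c : Multiplicative (ZMod p))} := by
          ext x
          simp only [Set.mem_preimage, Set.mem_iUnion, Set.mem_setOf_eq]
          constructor
          · intro hx
            exact ⟨⟨fH x, hx⟩, rfl⟩
          · rintro ⟨c, hc⟩
            have hx : fH x = (c : Multiplicative (ZMod p)) := by
              show Multiplicative.ofAdd (φ x) = (c : Multiplicative (ZMod p))
              rw [hc]
              rfl
            rw [hx]
            exact c.2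
        rw [hpre]
        exact isOpen_iUnion fun c => DminAux.isOpen_level hadd hker _
      have hrel1 : ∀ x : ↥A, (1 : Multiplicative (ZMod p)) * fH (x : H) *
          (1 : Multiplicative (ZMod p))⁻¹ = fH ((f x : H)) := by
        intro x
        rw [one_mul, inv_one, mul_one]
        show Multiplicative.ofAdd (φ (x : H)) = Multiplicative.ofAdd (φ ((f x : H)))
        rw [hAval x]
      obtain ⟨F, hFcont, hFcomp, hFt⟩ :=
        huniv (Multiplicative (ZMod p)) hPproP fH 1 hfHcont hrel1
      set ψ : G → ZMod p := fun g => Multiplicative.toAdd (F g) with hψ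
      have hψadd : ∀ x y : G, ψ (x * y) = ψ x + ψ y := by
        intro x y
        show Multiplicative.toAdd (F (x * y)) = _
        rw [map_mul]
        rfl
      have hψker : IsOpen {x : G | ψ x = 0} := by
        have hset : {x : G | ψ x = 0} = ⇑F ⁻¹' {1} := by
          ext x
          simp only [Set.mem_setOf_eq, Set.mem_preimage, Set.mem_singleton_iff]
          constructor
          · intro hx
            have h2 : Multiplicative.ofAdd (Multiplicative.toAdd (F x)) =
                Multiplicative.ofAdd (0 : ZMod p) := congrArg _ hx
            simpa using h2
          · intro hx
            show Multiplicative.toAdd (F x) = 0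
            rw [hx]
            rfl
        rw [hset]
        exact hFcont.isOpen_preimage _ (isOpen_discrete _)
      refine ⟨⟨ψ, ⟨hψadd, hψker⟩⟩, ?_⟩
      funext h
      show ψ (ι h) = φ h
      have hFι : F (ι h) = fH h := DFunLike.congr_fun hFcomp h
      show Multiplicative.toAdd (F (ι h)) = φ h
      rw [hFι]
      rfl
    -- a character detecting t : the kernel of r is nontrivial
    have honecont : Continuous ⇑(1 : H →* Multiplicative (ZMod p)) := by
      show Continuous fun _ : H => (1 : Multiplicative (ZMod p))
      exact continuous_const
    have honerel : ∀ x : ↥A, (Multiplicative.ofAdd (1 : ZMod p)) *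
        (1 : H →* Multiplicative (ZMod p)) (x : H) *
        (Multiplicative.ofAdd (1 : ZMod p))⁻¹ = (1 : H →* Multiplicative (ZMod p)) ((f x : H)) := by
      intro x
      simp
    obtain ⟨Ft, hFtcont, hFtcomp, hFtt⟩ :=
      huniv (Multiplicative (ZMod p)) hPproP 1 (Multiplicative.ofAdd (1 : ZMod p))
        honecont honerel
    set ψt : G → ZMod p := fun g => Multiplicative.toAdd (Ft g) with hψt
    have hψtadd : ∀ x y : G, ψt (x * y) = ψt x + ψt y := by
      intro x y
      show Multiplicative.toAdd (Ft (x * y)) = _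
      rw [map_mul]
      rfl
    have hψtker : IsOpen {x : G | ψt x = 0} := by
      have hset : {x : G | ψt x = 0} = ⇑Ft ⁻¹' {1} := by
        ext x
        simp only [Set.mem_setOf_eq, Set.mem_preimage, Set.mem_singleton_iff]
        constructor
        · intro hx
          have h2 : Multiplicative.ofAdd (Multiplicative.toAdd (Ft x)) =
              Multiplicative.ofAdd (0 : ZMod p) := congrArg _ hx
          simpa using h2
        · intro hx
          show Multiplicative.toAdd (Ft x) = 0
          rw [hx]
          rfl
      rw [hset]
      exact hFtcont.isOpen_preimage _ (isOpen_discrete _)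
    have hψtmem : ψt ∈ VG := ⟨hψtadd, hψtker⟩
    have hψtK : (⟨ψt, hψtmem⟩ : ↥VG) ∈ LinearMap.ker r := by
      rw [LinearMap.mem_ker]
      funext h
      show Multiplicative.toAdd (Ft (ι h)) = 0
      have hFι : Ft (ι h) = (1 : H →* Multiplicative (ZMod p)) h := DFunLike.congr_fun hFtcomp h
      rw [hFι]
      rfl
    have hψtne : (⟨ψt, hψtmem⟩ : ↥VG) ≠ 0 := by
      intro h0
      have h1 : ψt t = 0 := congrFun (congrArg Subtype.val h0) t
      have h2 : Multiplicative.toAdd (Ft t) = 0 := h1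
      rw [hFtt] at h2
      have h3 : (1 : ZMod p) = 0 := h2
      exact one_ne_zero h3
    haveI : Nontrivial ↥(LinearMap.ker r) := by
      refine ⟨⟨⟨_, hψtK⟩, 0, ?_⟩⟩
      intro hc
      exact hψtne (congrArg Subtype.val hc)
    have hkerpos : 1 ≤ Module.finrank (ZMod p) ↥(LinearMap.ker r) :=
      Module.finrank_pos_iff.mpr inferInstance
    haveI : Module.Finite (ZMod p) ↥(LinearMap.range r) := inferInstance
    have hK₀rank : Module.finrank (ZMod p) ↥K₀ ≤
        Module.finrank (ZMod p) ↥(LinearMap.range r) :=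
      LinearMap.finrank_le_finrank_of_injective (Submodule.inclusion_injective hK₀le)
    have hrn := LinearMap.finrank_range_add_finrank_ker r
    omega
  omega
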